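/- Let μ be a finite Borel measure on ℝ with no atoms (μ({x}) = 0 for every x ∈ ℝ) and let λ > 0. Then the function F(x) = ∫_ℝ G_λ(y − x) μ(dy) is differentiable at every x ∈ ℝ with F'(x) = ∫_ℝ g_λ(x − y) μ(dy). -/

import Mathlib

open MeasureTheory Filter Set

/-- `G_λ(x) = (2λ)^{-1/2} · exp(-√(2λ)·|x|)`. -/
noncomputable def Gl (l : ℝ) (x : ℝ) : ℝ :=
  (2 * l) ^ (-(1/2 : ℝ)) * Real.exp (-Real.sqrt (2 * l) * |x|)

/-- `g_λ(x) = -sgn(x) · exp(-√(2λ)·|x|)`. -/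
noncomputable def gl (l : ℝ) (x : ℝ) : ℝ :=
  -Real.sign x * Real.exp (-Real.sqrt (2 * l) * |x|)

lemma measurable_realSign : Measurable Real.sign := by
  unfold Real.sign
  exact Measurable.ite (measurableSet_lt measurable_id measurable_const)
    measurable_const <| Measurable.ite (measurableSet_lt measurable_const measurable_id)
    measurable_const measurable_const

lemma exp_lip {a b : ℝ} (ha : a ≤ 0) (hb : b ≤ 0) :
    |Real.exp a - Real.exp b| ≤ |a - b| := by
  wlog h : b ≤ a generalizing a b
  · rw [abs_sub_comm, abs_sub_comm a b]; exact this hb ha (le_of_not_ge h)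
  rw [abs_of_nonneg (sub_nonneg.mpr (Real.exp_le_exp.mpr h)),
    abs_of_nonneg (by linarith)]
  have h1 : Real.exp b ≥ Real.exp a * (1 + (b - a)) := by
    calc Real.exp b = Real.exp a * Real.exp (b - a) := by rw [← Real.exp_add]; ring_nf
    _ ≥ Real.exp a * (1 + (b - a)) := by
        have := Real.add_one_le_exp (b - a)
        nlinarith [Real.exp_pos a]
  nlinarith [Real.exp_pos a, Real.exp_le_one_iff.mpr ha]

theorem integral_Gl_hasDerivAt (μ : Measure ℝ) [IsFiniteMeasure μ]
    (hatomless : ∀ x : ℝ, μ {x} = 0) (l : ℝ) (hl : 0 < l) (x : ℝ) :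
    HasDerivAt (fun x : ℝ => ∫ y, Gl l (y - x) ∂μ) (∫ y, gl l (x - y) ∂μ) x := by
  set c : ℝ := Real.sqrt (2 * l) with hc
  have hcpos : 0 < c := Real.sqrt_pos.mpr (by linarith)
  have hC : (2 * l) ^ (-(1/2 : ℝ)) = c⁻¹ := by
    rw [Real.rpow_neg (by linarith), hc, Real.sqrt_eq_rpow]
  -- continuity of Gl
  have hGlcont : Continuous (Gl l) := by
    unfold Gl
    fun_prop
  have hglmeas : AEStronglyMeasurable (fun y => gl l (x - y)) μ := by
    apply Measurable.aestronglyMeasurable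
    unfold gl
    apply Measurable.mul
    · exact (measurable_realSign.comp (measurable_const.sub measurable_id)).neg
    · fun_prop
  -- Lipschitz with constant 1
  have hlip : ∀ y : ℝ, LipschitzWith 1 (fun x => Gl l (y - x)) := by
    intro y
    rw [lipschitzWith_iff_dist_le_mul]
    intro a b
    simp only [Real.dist_eq, Gl, hC, NNReal.coe_one, one_mul]
    rw [← mul_sub, abs_mul, abs_of_nonneg (by positivity : (0:ℝ) ≤ c⁻¹)]
    have h1 : |Real.exp (-c * |y - a|) - Real.exp (-c * |y - b|)| ≤
        |(-c * |y - a|) - (-c * |y - b|)| :=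
      exp_lip (by nlinarith [abs_nonneg (y - a)]) (by nlinarith [abs_nonneg (y - b)])
    have h2 : |(-c * |y - a|) - (-c * |y - b|)| = c * |(|y - a| - |y - b|)| := by
      rw [show (-c * |y - a|) - (-c * |y - b|) = -(c * (|y - a| - |y - b|)) by ring,
        abs_neg, abs_mul, abs_of_pos hcpos]
    have h3 : |(|y - a| - |y - b|)| ≤ |a - b| := by
      have := abs_abs_sub_abs_le_abs_sub (y - a) (y - b)
      simpa [show y - a - (y - b) = b - a by ring, abs_sub_comm] using this
    calc c⁻¹ * |Real.exp (-c * |y - a|) - Real.exp (-c * |y - b|)|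
        ≤ c⁻¹ * (c * |a - b|) := by
          apply mul_le_mul_of_nonneg_left _ (by positivity)
          calc _ ≤ |(-c * |y - a|) - (-c * |y - b|)| := h1
          _ = c * |(|y - a| - |y - b|)| := h2
          _ ≤ c * |a - b| := by nlinarith
      _ = |a - b| := by field_simp
  -- pointwise derivative off the diagonal
  have hderiv : ∀ y : ℝ, y ≠ x → HasDerivAt (fun x => Gl l (y - x)) (gl l (x - y)) x := by
    intro y hy
    have h1 : HasDerivAt (fun z : ℝ => y - z) (-1) x := (hasDerivAt_id x).const_sub y
    have h2 : HasDerivAt (fun z : ℝ => |y - z|) ((SignType.sign (y - x) : ℝ) * (-1)) x :=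
      (hasDerivAt_abs (sub_ne_zero.mpr hy)).comp x h1
    have h3 : HasDerivAt (fun z : ℝ => Real.exp (-c * |y - z|))
        (Real.exp (-c * |y - x|) * (-c * ((SignType.sign (y - x) : ℝ) * (-1)))) x :=
      (h2.const_mul (-c)).exp
    have h4 := h3.const_mul ((2 * l) ^ (-(1/2 : ℝ)))
    have key : (2 * l) ^ (-(1/2 : ℝ)) *
        (Real.exp (-c * |y - x|) * (-c * ((SignType.sign (y - x) : ℝ) * (-1)))) =
        gl l (x - y) := by
      rw [hC, gl, abs_sub_comm x y]
      have hc' : c⁻¹ * c = 1 := inv_mul_cancel₀ hcpos.ne'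
      rcases lt_or_gt_of_ne (sub_ne_zero.mpr hy : y - x ≠ 0) with h | h
      · rw [sign_neg h, Real.sign_of_pos (by linarith : 0 < x - y)]
        simp only [SignType.coe_neg, SignType.coe_one]
        linear_combination (-Real.exp (-c * |y - x|)) * hc'
      · rw [sign_pos h, Real.sign_of_neg (by linarith : x - y < 0)]
        simp only [SignType.coe_one]
        linear_combination Real.exp (-c * |y - x|) * hc'
    rw [← key]
    exact h4
  -- apply dominated differentiation
  refine (hasDerivAt_integral_of_dominated_loc_of_lip (μ := μ) (x₀ := x)
    (F := fun x y => Gl l (y - x))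
    (F' := fun y => gl l (x - y)) (bound := fun _ => (1 : ℝ)) (s := Metric.ball x 1) (Metric.ball_mem_nhds x one_pos)
    (Eventually.of_forall fun x' =>
      ((hGlcont.comp (continuous_id.sub continuous_const)).measurable).aestronglyMeasurable)
    ?_ hglmeas ?_ (integrable_const 1) ?_).2
  · -- integrability of F x₀
    apply Integrable.mono' (integrable_const ((2 * l) ^ (-(1/2 : ℝ))))
    · exact ((hGlcont.comp (continuous_id.sub continuous_const)).measurable).aestronglyMeasurable
    · refine Eventually.of_forall fun y => ?_
      simp only [Gl, Real.norm_eq_abs, abs_mul]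
      have h0 : (0:ℝ) < (2 * l) ^ (-(1/2 : ℝ)) := Real.rpow_pos_of_pos (by linarith) _
      rw [abs_of_pos h0, abs_of_pos (Real.exp_pos _)]
      nth_rewrite 2 [show (2 * l) ^ (-(1/2 : ℝ)) = (2 * l) ^ (-(1/2 : ℝ)) * 1 by ring]
      apply mul_le_mul_of_nonneg_left _ h0.le
      exact Real.exp_le_one_iff.mpr (by nlinarith [abs_nonneg (y - x), hcpos])
    -- Lipschitz
  · refine Eventually.of_forall fun y => ?_
    have : (Real.nnabs (1 : ℝ)) = 1 := by simp
    rw [this]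
    exact (hlip y).lipschitzOnWith
  · -- ae differentiability
    have : ∀ᵐ y ∂μ, y ≠ x := by
      rw [ae_iff]
      simpa using hatomless x
    exact this.mono fun y hy => hderiv y hy
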